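/- Let 0 ≤ α < 1 and β > 1. (i) If c = c_1…c_k and d = d_1…d_l are both prefixes of a and the concatenation cd belongs to L^{α,β}, then cd is a prefix of a. (ii) If c and d are both prefixes of b and cd ∈ L^{α,β}, then cd is a prefix of b. -/

import Mathlib

open Filter Topology MeasureTheory ENNReal
open scoped Classical

noncomputable section

namespace AB

/-- The (α,β)-transformation `T(x) = βx + α − ⌊βx + α⌋`. -/
def T (α β : ℝ) (x : ℝ) : ℝ := β * x + α - ⌊β * x + α⌋

/-- `λ = ⌈α+β⌉ − 1`, as a natural number. -/
def lamNat (α β : ℝ) : ℕ := (⌈α + β⌉ - 1).toNat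

/-- The digit of `x ∈ [0,1)`: the index `k` with `x ∈ J_k`, namely `⌊βx + α⌋`. -/
def digit (α β : ℝ) (x : ℝ) : ℕ := (⌊β * x + α⌋).toNat

/-- The (α,β)-expansion of `x`. -/
def iSeq (α β : ℝ) (x : ℝ) : ℕ → ℕ := fun n => digit α β ((T α β)^[n] x)

/-- The one-sided (α,β)-shift: closure (in the product topology) of the set of expansions. -/
def Xab (α β : ℝ) : Set (ℕ → ℕ) :=
  closure {s | ∃ x ∈ Set.Ico (0 : ℝ) 1, s = iSeq α β x}

/-- Word of given length read in a one-sided sequence starting at position `k`. -/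
def wordN (s : ℕ → ℕ) (k len : ℕ) : List ℕ := (List.range len).map fun i => s (k + i)

/-- The language of the (α,β)-shift: finite words appearing in points of `Xab`. -/
def Lang (α β : ℝ) : Set (List ℕ) :=
  {w | ∃ s ∈ Xab α β, ∃ k : ℕ, w = wordN s k w.length}

/-- `a = i_{α,β}(0)`. -/
def aSeq (α β : ℝ) : ℕ → ℕ := iSeq α β 0

/-- The prefix of length `l` of a sequence, as a word. -/
def pre (s : ℕ → ℕ) (l : ℕ) : List ℕ := (List.range l).map s

/-- Lexicographic (non-strict) order on words. -/
def wordLe (u v : List ℕ) : Prop := u = v ∨ List.Lex (· < ·) u v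

/-- Lexicographic (non-strict) order on one-sided sequences. -/
def seqLe (x y : ℕ → ℕ) : Prop :=
  x = y ∨ ∃ n : ℕ, (∀ i < n, x i = y i) ∧ x n < y n

/-- The largest `k ≤ |w|` such that the length-`k` suffix of `w` equals the length-`k`
prefix of `s` (this is `k1` for `s = a` and `k2` for `s = b`). -/
def kk (s : ℕ → ℕ) (w : List ℕ) : ℕ :=
  Nat.findGreatest (fun k => w.drop (w.length - k) = pre s k) w.length

/-- The set of finite prefixes of a sequence (`P^a`, `P^b`). -/
def Pset (s : ℕ → ℕ) : Set (List ℕ) := {u | ∃ l : ℕ, u = pre s l}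

/-- The distinguished suffix `s(w)`. -/
def sWord (a b : ℕ → ℕ) (w : List ℕ) : List ℕ :=
  if kk b w < kk a w then w.drop (w.length - kk a w)
  else if kk a w < kk b w then w.drop (w.length - kk b w)
  else []

/-- The hat operation on `P = P^a ∪ P^b` (for `β > 3`, `α = 1/β`). -/
def hatP (a b : ℕ → ℕ) (lam : ℕ) (u : List ℕ) : List ℕ :=
  if u = [] then []
  else if u ∈ Pset a then u.dropLast ++ [u.getLast?.getD 0 + 1]
  else if 3 ≤ u.getLast?.getD 0 then u.dropLast ++ [u.getLast?.getD 0 - 1]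
  else
    (u.set (u.length - kk a u.dropLast - 2) (u.getD (u.length - kk a u.dropLast - 2) 0 - 1)).set
      (u.length - kk a u.dropLast - 1) (lam - 1)

/-- `ŵ` for `w = v·s(w)`: replace the distinguished suffix by its hat. -/
def hatW (a b : ℕ → ℕ) (lam : ℕ) (w : List ℕ) : List ℕ :=
  w.take (w.length - (sWord a b w).length) ++ hatP a b lam (sWord a b w)

/-- `w̃`: the hat operation applied twice. -/
def tildeW (a b : ℕ → ℕ) (lam : ℕ) (w : List ℕ) : List ℕ :=
  hatW a b lam (hatW a b lam w)

/-- `z(u)` for `u ∈ P^b`. -/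
def zP (a b : ℕ → ℕ) (u : List ℕ) : ℕ :=
  if u = [] then 0
  else sSup ({k : ℕ | (u ++ pre (fun i => a (kk a u + i)) k) ∈ Pset b} ∪ {0})

/-- `z(w)` for a word `w` in the language. -/
def zW (a b : ℕ → ℕ) (w : List ℕ) : ℕ :=
  if kk a w < kk b w then zP a b (w.drop (w.length - kk b w)) else 0

/-- `z̄(n) = max{z(u) : u prefix of b, |u| ≤ n}`. -/
def zbar (a b : ℕ → ℕ) (n : ℕ) : ℕ :=
  (Finset.range (n + 1)).sup fun l => zP a b (pre b l)

/-- The natural extension `Σ^{α,β}`. -/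
def SigmaAB (α β : ℝ) : Set (ℤ → ℕ) :=
  {x | ∀ k : ℤ, (fun n : ℕ => x (k + n)) ∈ Xab α β}

/-- `σ^j` on two-sided sequences. -/
def shiftI {A : Type*} (j : ℤ) (x : ℤ → A) : ℤ → A := fun n => x (n + j)

/-- Word of given length read in a two-sided sequence starting at position `k`. -/
def wordZ (x : ℤ → ℕ) (k : ℤ) (len : ℕ) : List ℕ := (List.range len).map fun i => x (k + i)

/-- The map `g : L^{α,β} → {0,1}`. -/
def gW (a b : ℕ → ℕ) (w : List ℕ) : ℕ :=
  if kk a w = 0 ∧ 0 < kk b w ∧ b (kk b w) ≤ 1 then 0 else 1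

/-- `w^♯`: the word `w` placed at positions `k,…,k+|w|−1`, followed by `g(w)` at
position `k+|w|`, and `1` at all other positions. -/
def wSharp (a b : ℕ → ℕ) (k : ℤ) (w : List ℕ) : ℤ → ℕ :=
  fun j => if k ≤ j ∧ j < k + w.length then w.getD (j - k).toNat 1
           else if j = k + w.length then gW a b w else 1

/-- The finite approximation sets `E^n ⊆ Σ^{α,β}`. -/
def En (α β : ℝ) (b : ℕ → ℕ) (n : ℕ) : Set (ℤ → ℕ) :=
  {x | wordZ x (-(n : ℤ)) (2 * n + 1) ∈ Lang α β ∧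
       x ((n : ℤ) + 1) = gW (aSeq α β) b (wordZ x (-(n : ℤ)) (2 * n + 1)) ∧
       ∀ j : ℤ, j < -(n : ℤ) ∨ (n : ℤ) + 1 < j → x j = 1}

/-- `s(x_k^-) = ε` for the left-infinite word `x_{(-∞,k-1]}`: no nonempty suffix of it is a
prefix of `a` or of `b`. -/
def leftStar (a b : ℕ → ℕ) (x : ℤ → ℕ) (k : ℤ) : Prop :=
  (∀ K : ℕ, 1 ≤ K → ¬ ∀ i : ℕ, i < K → x (k - K + i) = a i) ∧
  (∀ K : ℕ, 1 ≤ K → ¬ ∀ i : ℕ, i < K → x (k - K + i) = b i)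

/-- `E^n_{[k,l]}(v)`. -/
def EnCyl (α β : ℝ) (b : ℕ → ℕ) (n : ℕ) (k l : ℤ) (v : List ℕ) : Set (ℤ → ℕ) :=
  {x ∈ En α β b n | wordZ x k (l - k + 1).toNat = v}

/-- `E^{*,n}_{[k,l]}(v)`. -/
def EnCylStar (α β : ℝ) (b : ℕ → ℕ) (n : ℕ) (k l : ℤ) (v : List ℕ) : Set (ℤ → ℕ) :=
  {x ∈ EnCyl α β b n k l v | leftStar (aSeq α β) b x k}

/-- The Birkhoff sum `∑_{j=−n}^{n} φ(σ^j x)`. -/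
def birkhoff (φ : (ℤ → ℕ) → ℝ) (n : ℕ) (x : ℤ → ℕ) : ℝ :=
  ∑ j ∈ Finset.Icc (-(n : ℤ)) (n : ℤ), φ (shiftI j x)

/-- `Ξ^n_{[k,l]}(v)`. -/
def Xi (α β : ℝ) (b : ℕ → ℕ) (φ : (ℤ → ℕ) → ℝ) (n : ℕ) (k l : ℤ) (v : List ℕ) : ℝ :=
  ∑' x : (EnCyl α β b n k l v), Real.exp (birkhoff φ n x.1)

/-- `Ξ^{*,n}_{[k,l]}(v)`. -/
def XiStar (α β : ℝ) (b : ℕ → ℕ) (φ : (ℤ → ℕ) → ℝ) (n : ℕ) (k l : ℤ) (v : List ℕ) : ℝ :=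
  ∑' x : (EnCylStar α β b n k l v), Real.exp (birkhoff φ n x.1)

/-- `δ_i(f)`, as an extended nonnegative real. -/
def oscE {A : Type*} (f : (ℤ → A) → ℝ) (i : ℤ) : ℝ≥0∞ :=
  ⨆ (x : ℤ → A) (y : ℤ → A) (_ : ∀ k : ℤ, k ≠ i → x k = y k), ENNReal.ofReal |f x - f y|

/-- `‖f‖_δ` for a function on the full shift. -/
def enormFull {A : Type*} (f : (ℤ → A) → ℝ) : ℝ≥0∞ := ∑' i : ℤ, oscE f i

/-- `‖f‖_δ` for a function on a subshift `X`: infimum over continuous extensions. -/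
def enormOn {A : Type*} [TopologicalSpace A] (X : Set (ℤ → A)) (f : (ℤ → A) → ℝ) : ℝ≥0∞ :=
  ⨅ (g : (ℤ → A) → ℝ) (_ : Continuous g) (_ : ∀ x ∈ X, g x = f x), enormFull g

/-- `f` has bounded total oscillations on `X` (i.e. `f ∈ B(X)`). -/
def BTO {A : Type*} [TopologicalSpace A] (X : Set (ℤ → A)) (f : (ℤ → A) → ℝ) : Prop :=
  ContinuousOn f X ∧ enormOn X f ≠ ⊤

/-- The real value of `‖f‖_δ`. -/
def dnorm {A : Type*} [TopologicalSpace A] (X : Set (ℤ → A)) (f : (ℤ → A) → ℝ) : ℝ :=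
  (enormOn X f).toReal

/-- The pressure `p(φ)`. -/
def pressure (α β : ℝ) (b : ℕ → ℕ) (φ : (ℤ → ℕ) → ℝ) : ℝ :=
  limUnder atTop fun n : ℕ =>
    Real.log (∑' x : (En α β b n), Real.exp (birkhoff φ n x.1)) / (2 * n + 1)

/-- `ν` is a tangent functional to the pressure at `φ` (an equilibrium measure for `φ`). -/
def IsTangent (α β : ℝ) (b : ℕ → ℕ) (φ : (ℤ → ℕ) → ℝ) (ν : Measure (ℤ → ℕ)) : Prop :=
  ∀ f : (ℤ → ℕ) → ℝ, ContinuousOn f (SigmaAB α β) →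
    pressure α β b φ + ∫ x, f x ∂ν ≤ pressure α β b (fun x => φ x + f x)

/-- The cylinder `[x_1 … x_m]` in `Σ^{α,β}`. -/
def cyl (α β : ℝ) (x : ℤ → ℕ) (m : ℕ) : Set (ℤ → ℕ) :=
  {y ∈ SigmaAB α β | ∀ i : ℕ, 1 ≤ i → i ≤ m → y (i : ℤ) = x (i : ℤ)}

/-- `ν` is a weak Gibbs measure for `ψ` on `Σ^{α,β}`. -/
def WeakGibbs (α β : ℝ) (ν : Measure (ℤ → ℕ)) (ψ : (ℤ → ℕ) → ℝ) : Prop :=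
  ∀ δ : ℝ, 0 < δ → ∃ N : ℕ, ∀ m : ℕ, N ≤ m → ∀ x ∈ SigmaAB α β,
    |Real.log (ν (cyl α β x m)).toReal / m -
      (∑ l ∈ Finset.Icc (1 : ℤ) (m : ℤ), ψ (shiftI l x)) / m| ≤ δ


/-- Concatenation `w·x` of a word and a one-sided sequence. -/
def wordApp (w : List ℕ) (x : ℕ → ℕ) : ℕ → ℕ :=
  fun n => if n < w.length then w.getD n 1 else x (n - w.length)

/-- `σ^k` on one-sided sequences. -/
def shiftN (k : ℕ) (s : ℕ → ℕ) : ℕ → ℕ := fun n => s (k + n)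

end AB

namespace AB

lemma iter_nonneg {α β x : ℝ} (hx : 0 ≤ x) (n : ℕ) : 0 ≤ (T α β)^[n] x := by
  cases n with
  | zero => simpa
  | succ n =>
    rw [Function.iterate_succ_apply']
    exact Int.fract_nonneg (β * (T α β)^[n] x + α)

lemma iter_lt_one {α β x : ℝ} (hx : x < 1) (n : ℕ) : (T α β)^[n] x < 1 := by
  cases n with
  | zero => simpa
  | succ n =>
    rw [Function.iterate_succ_apply']
    exact Int.fract_lt_one (β * (T α β)^[n] x + α)

lemma digit_cast {α β x : ℝ} (hα : 0 ≤ α) (hβ : 1 < β) (hx : 0 ≤ x) :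
    ((digit α β x : ℕ) : ℝ) = (⌊β * x + α⌋ : ℝ) := by
  have h0 : (0:ℤ) ≤ ⌊β * x + α⌋ := Int.floor_nonneg.mpr (by nlinarith)
  have := Int.toNat_of_nonneg h0
  rw [digit]
  exact_mod_cast congrArg (fun z : ℤ => (z : ℝ)) this

lemma T_eq {α β x : ℝ} (hα : 0 ≤ α) (hβ : 1 < β) (hx : 0 ≤ x) :
    T α β x = β * x + α - digit α β x := by
  rw [T, digit_cast hα hβ hx]

lemma key {α β : ℝ} (hα : 0 ≤ α) (hβ : 1 < β) {x y : ℝ} (hx : 0 ≤ x) (hxy : x ≤ y) :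
    ∀ n, (∀ i < n, iSeq α β x i = iSeq α β y i) → (T α β)^[n] x ≤ (T α β)^[n] y := by
  intro n
  induction n with
  | zero => intro _; simpa
  | succ n ih =>
    intro h
    have huv := ih (fun i hi => h i (Nat.lt_succ_of_lt hi))
    have hu : 0 ≤ (T α β)^[n] x := iter_nonneg hx n
    have hv : 0 ≤ (T α β)^[n] y := hu.trans huv
    have hd : digit α β ((T α β)^[n] x) = digit α β ((T α β)^[n] y) :=
      h n (Nat.lt_succ_self n)
    rw [Function.iterate_succ_apply', Function.iterate_succ_apply',
      T_eq hα hβ hu, T_eq hα hβ hv, hd]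
    have hβ0 : (0:ℝ) < β := lt_trans one_pos hβ
    nlinarith

lemma digit_mono {α β : ℝ} (hα : 0 ≤ α) (hβ : 1 < β) {x y : ℝ} (hxy : x ≤ y) :
    digit α β x ≤ digit α β y := by
  have hβ0 : (0:ℝ) < β := lt_trans one_pos hβ
  exact Int.toNat_le_toNat (Int.floor_le_floor (by nlinarith))

lemma ordDigit {α β : ℝ} (hα : 0 ≤ α) (hβ : 1 < β) {x y : ℝ} (hx : 0 ≤ x) (hxy : x ≤ y)
    (n : ℕ) (h : ∀ i < n, iSeq α β x i = iSeq α β y i) : iSeq α β x n ≤ iSeq α β y n :=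
  digit_mono hα hβ (key hα hβ hx hxy n h)

lemma iSeq_shift (α β x : ℝ) (m n : ℕ) :
    iSeq α β x (m + n) = iSeq α β ((T α β)^[m] x) n := by
  simp only [iSeq, add_comm m n, Function.iterate_add_apply]

lemma cylinder_open (s : ℕ → ℕ) (M : ℕ) : IsOpen {t : ℕ → ℕ | ∀ i < M, t i = s i} := by
  have he : {t : ℕ → ℕ | ∀ i < M, t i = s i}
      = ⋂ i ∈ Finset.range M, (fun t : ℕ → ℕ => t i) ⁻¹' {s i} := by
    ext t
    simp [Finset.mem_range, Set.mem_iInter]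
  rw [he]
  exact isOpen_biInter_finset fun i _ =>
    (isOpen_discrete {s i}).preimage (continuous_apply i)

lemma closure_approx {α β : ℝ} {s : ℕ → ℕ} (hs : s ∈ Xab α β) (M : ℕ) :
    ∃ x ∈ Set.Ico (0:ℝ) 1, ∀ i < M, s i = iSeq α β x i := by
  obtain ⟨t, htU, x, hx, rfl⟩ :=
    mem_closure_iff.mp hs _ (cylinder_open s M) (fun i _ => rfl)
  exact ⟨x, hx, fun i hi => (htU i hi).symm⟩

lemma pre_length (s : ℕ → ℕ) (l : ℕ) : (pre s l).length = l := by simp [pre]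

lemma pre_getElem (s : ℕ → ℕ) (l i : ℕ) (h : i < (pre s l).length) :
    (pre s l)[i] = s i := by
  simp [pre]

lemma wordN_getElem (s : ℕ → ℕ) (k len i : ℕ) (h : i < (wordN s k len).length) :
    (wordN s k len)[i] = s (k + i) := by
  simp [wordN]

lemma mem_Pset {s : ℕ → ℕ} {c : List ℕ} (h : c ∈ Pset s) : c = pre s c.length := by
  obtain ⟨l, rfl⟩ := h
  rw [pre_length]

lemma lang_orbit {α β : ℝ} {w : List ℕ} (h : w ∈ Lang α β) :
    ∃ x ∈ Set.Ico (0:ℝ) 1, ∃ m : ℕ, ∀ i, (hi : i < w.length) → w[i] = iSeq α β x (m + i) := by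
  obtain ⟨s, hs, m, hw⟩ := h
  obtain ⟨x, hx, hxs⟩ := closure_approx hs (m + w.length)
  refine ⟨x, hx, m, fun i hi => ?_⟩
  have h1 : w[i] = s (m + i) := by
    rw [List.getElem_of_eq hw hi, wordN_getElem]
  rw [h1, hxs (m + i) (by omega)]

lemma b_approx {α β : ℝ} {b : ℕ → ℕ}
    (hb : Tendsto (iSeq α β) (𝓝[<] (1:ℝ)) (𝓝 b)) (N : ℕ) {y : ℝ} (hy : y < 1) :
    ∃ x : ℝ, y ≤ x ∧ x ∈ Set.Ico (0:ℝ) 1 ∧ ∀ i < N, iSeq α β x i = b i := by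
  have hmem : {t : ℕ → ℕ | ∀ i < N, t i = b i} ∈ 𝓝 b :=
    (cylinder_open b N).mem_nhds (fun i _ => rfl)
  have hU : ∀ᶠ x in 𝓝[<] (1:ℝ), ∀ i < N, iSeq α β x i = b i :=
    hb.eventually (eventually_of_mem hmem fun t ht => ht)
  have h1 : ∀ᶠ x in 𝓝[<] (1:ℝ), max y 0 < x :=
    eventually_nhdsWithin_of_eventually_nhds (eventually_gt_nhds (max_lt hy one_pos))
  have h2 : ∀ᶠ x in 𝓝[<] (1:ℝ), x < 1 := eventually_mem_nhdsWithin
  obtain ⟨x, hx1, hx2, hx3⟩ := (h1.and (h2.and hU)).exists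
  exact ⟨x, le_of_lt (lt_of_le_of_lt (le_max_left y 0) hx1),
    ⟨le_of_lt (lt_of_le_of_lt (le_max_right y 0) hx1), hx2⟩, hx3⟩

lemma le_b {α β : ℝ} (hα : 0 ≤ α) (hβ : 1 < β) {b : ℕ → ℕ}
    (hb : Tendsto (iSeq α β) (𝓝[<] (1:ℝ)) (𝓝 b)) {w : ℝ} (hw : w ∈ Set.Ico (0:ℝ) 1)
    (n : ℕ) (h : ∀ i < n, iSeq α β w i = b i) : iSeq α β w n ≤ b n := by
  obtain ⟨x, hwx, hx, hagree⟩ := b_approx hb (n + 1) hw.2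
  have h2 := ordDigit hα hβ hw.1 hwx n (fun i hi => by
    rw [h i hi, hagree i (by omega)])
  rwa [hagree n (by omega)] at h2

/-- concatenations of prefixes of `a` (resp. `b`) lying in the language are
prefixes of `a` (resp. `b`). -/
theorem stmt2 (α β : ℝ) (hα0 : 0 ≤ α) (hα1 : α < 1) (hβ : 1 < β)
    (b : ℕ → ℕ) (hb : Tendsto (iSeq α β) (𝓝[<] (1 : ℝ)) (𝓝 b))
    (c d : List ℕ) :
    (c ∈ Pset (aSeq α β) → d ∈ Pset (aSeq α β) → c ++ d ∈ Lang α β →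
      c ++ d ∈ Pset (aSeq α β)) ∧
    (c ∈ Pset b → d ∈ Pset b → c ++ d ∈ Lang α β → c ++ d ∈ Pset b) := by
  constructor
  · -- part (i): prefixes of a
    intro hc hd hcd
    have hc' := mem_Pset hc
    have hd' := mem_Pset hd
    set k := c.length with hk
    set l := d.length with hl
    have hlen : (c ++ d).length = k + l := by simp [hk, hl]
    obtain ⟨x, hx, m, hor⟩ := lang_orbit hcd
    set y := (T α β)^[m] x with hy
    have hy0 : 0 ≤ y := iter_nonneg hx.1 m
    have hcE : ∀ i (hi : i < c.length), getElem c i hi = aSeq α β i := by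
      intro i hi
      rw [List.getElem_of_eq hc' hi, pre_getElem]
    have hdE : ∀ i (hi : i < d.length), d[i] = aSeq α β i := by
      intro i hi
      rw [List.getElem_of_eq hd' hi, pre_getElem]
    have H1 : ∀ i < k, iSeq α β 0 i = iSeq α β y i := by
      intro i hi
      have h1 : (c ++ d)[i]'(by omega) = getElem c i (by omega) := List.getElem_append_left (by omega)
      have h2 := hor i (by omega)
      rw [h1, hcE i hi] at h2
      rw [← iSeq_shift α β x m i, ← h2]
      rfl
    have H2 : ∀ i < l, iSeq α β 0 i = iSeq α β ((T α β)^[k] y) i := by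
      intro i hi
      have h1 : (c ++ d)[k + i]'(by omega) = d[i] := by
        rw [List.getElem_append_right (by omega)]
        congr 1
        omega
      have h2 := hor (k + i) (by omega)
      rw [h1, hdE i hi] at h2
      rw [← iSeq_shift α β y k i, ← iSeq_shift α β x m (k + i), ← h2]
      rfl
    have hky : (T α β)^[k] 0 ≤ (T α β)^[k] y := key hα0 hβ le_rfl hy0 k H1
    have claim : ∀ i, i < l → iSeq α β ((T α β)^[k] 0) i = iSeq α β 0 i := by
      intro i
      induction i using Nat.strong_induction_on with
      | _ i IH =>
        intro hi
        have le1 : iSeq α β 0 i ≤ iSeq α β ((T α β)^[k] 0) i :=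
          ordDigit hα0 hβ le_rfl (iter_nonneg le_rfl k) i
            (fun j hj => (IH j hj (hj.trans hi)).symm)
        have le2 : iSeq α β ((T α β)^[k] 0) i ≤ iSeq α β ((T α β)^[k] y) i :=
          ordDigit hα0 hβ (iter_nonneg le_rfl k) hky i
            (fun j hj => by rw [IH j hj (hj.trans hi), H2 j (hj.trans hi)])
        have h3 := H2 i hi
        omega
    refine ⟨k + l, ?_⟩
    apply List.ext_getElem (by simp [pre_length, hk, hl])
    intro j h1 h2
    rw [pre_getElem]
    rcases lt_or_ge j k with hj | hj
    · rw [List.getElem_append_left hj, hcE j hj]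
    · have hjl : j - k < l := by omega
      have h4 : (c ++ d)[j] = d[j - k]'hjl := List.getElem_append_right hj
      rw [h4, hdE (j - k) hjl]
      show iSeq α β 0 (j - k) = iSeq α β 0 j
      have h5 : iSeq α β 0 (k + (j - k)) = iSeq α β ((T α β)^[k] 0) (j - k) :=
        iSeq_shift α β 0 k (j - k)
      have h6 : k + (j - k) = j := by omega
      rw [h6] at h5
      rw [← claim (j - k) hjl, ← h5]
  · -- part (ii): prefixes of b
    intro hc hd hcd
    have hc' := mem_Pset hc
    have hd' := mem_Pset hd
    set k := c.length with hk
    set l := d.length with hl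
    have hlen : (c ++ d).length = k + l := by simp [hk, hl]
    obtain ⟨x, hx, m, hor⟩ := lang_orbit hcd
    set y := (T α β)^[m] x with hy
    have hy0 : 0 ≤ y := iter_nonneg hx.1 m
    have hy1 : y < 1 := iter_lt_one hx.2 m
    have hcE : ∀ i (hi : i < c.length), getElem c i hi = b i := by
      intro i hi
      rw [List.getElem_of_eq hc' hi, pre_getElem]
    have hdE : ∀ i (hi : i < d.length), d[i] = b i := by
      intro i hi
      rw [List.getElem_of_eq hd' hi, pre_getElem]
    have H1 : ∀ i < k, iSeq α β y i = b i := by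
      intro i hi
      have h1 : (c ++ d)[i]'(by omega) = getElem c i (by omega) := List.getElem_append_left (by omega)
      have h2 := hor i (by omega)
      rw [h1, hcE i hi] at h2
      rw [← iSeq_shift α β x m i, ← h2]
    have H2 : ∀ i < l, iSeq α β ((T α β)^[k] y) i = b i := by
      intro i hi
      have h1 : (c ++ d)[k + i]'(by omega) = d[i] := by
        rw [List.getElem_append_right (by omega)]
        congr 1
        omega
      have h2 := hor (k + i) (by omega)
      rw [h1, hdE i hi] at h2
      rw [← iSeq_shift α β y k i, ← iSeq_shift α β x m (k + i), ← h2]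
    obtain ⟨x1, hyx1, hx1, hx1b⟩ := b_approx hb (k + l) hy1
    have hzY : (T α β)^[k] y ≤ (T α β)^[k] x1 :=
      key hα0 hβ hy0 hyx1 k (fun i hi => by
        rw [H1 i hi, hx1b i (by omega)])
    have HY : ∀ i < l, iSeq α β ((T α β)^[k] x1) i = b (k + i) := by
      intro i hi
      rw [← iSeq_shift α β x1 k i, hx1b (k + i) (by omega)]
    have claim : ∀ i, i < l → b (k + i) = b i := by
      intro i
      induction i using Nat.strong_induction_on with
      | _ i IH =>
        intro hi
        have le1 : iSeq α β ((T α β)^[k] y) i ≤ iSeq α β ((T α β)^[k] x1) i :=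
          ordDigit hα0 hβ (iter_nonneg hy0 k) hzY i (fun j hj => by
            rw [H2 j (hj.trans hi), HY j (hj.trans hi), IH j hj (hj.trans hi)])
        have le2 : iSeq α β ((T α β)^[k] x1) i ≤ b i :=
          le_b hα0 hβ hb ⟨iter_nonneg hx1.1 k, iter_lt_one hx1.2 k⟩ i (fun j hj => by
            rw [HY j (hj.trans hi), IH j hj (hj.trans hi)])
        have h3 := H2 i hi
        have h4 := HY i hi
        omega
    refine ⟨k + l, ?_⟩
    apply List.ext_getElem (by simp [pre_length, hk, hl])
    intro j h1 h2
    rw [pre_getElem]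
    rcases lt_or_ge j k with hj | hj
    · rw [List.getElem_append_left hj, hcE j hj]
    · have hjl : j - k < l := by omega
      have h4 : (c ++ d)[j] = d[j - k]'hjl := List.getElem_append_right hj
      rw [h4, hdE (j - k) hjl]
      have h6 : k + (j - k) = j := by omega
      rw [← claim (j - k) hjl, h6]

end AB
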